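/- Let 2 ≤ r ≤ n and let T be an (r × n, n)-near triple array (i.e., an r × n near Youden rectangle). For any column j0, the r × (n − 1) design T′ obtained from T by deleting column j0 is an (r × (n − 1), n)-near triple array. -/

import Mathlib

set_option maxHeartbeats 1000000


open Finset

/-- An `r × c` row-column design on `v` symbols is binary if no symbol occurs
twice in any row or in any column. -/
def IsBinaryDesign {r c v : ℕ} (T : Fin r × Fin c → Fin v) : Prop :=
  (∀ (i : Fin r) (j j' : Fin c), j ≠ j' → T (i, j) ≠ T (i, j')) ∧
  (∀ (j : Fin c) (i i' : Fin r), i ≠ i' → T (i, j) ≠ T (i', j))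

/-- The replication number of a symbol `s`: the number of cells containing `s`. -/
def replNum {r c v : ℕ} (T : Fin r × Fin c → Fin v) (s : Fin v) : ℕ :=
  (Finset.univ.filter (fun p : Fin r × Fin c => T p = s)).card

/-- The average replication number `e = rc/v` as a rational number. -/
def avgRepl (r c v : ℕ) : ℚ := ((r : ℚ) * (c : ℚ)) / (v : ℚ)

/-- A design is equireplicate if `e = rc/v` is an integer and every symbol has
replication number `e`. -/
def IsEquireplicate {r c v : ℕ} (T : Fin r × Fin c → Fin v) : Prop :=
  (avgRepl r c v).den = 1 ∧ ∀ s : Fin v, (replNum T s : ℚ) = avgRepl r c v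

/-- A design is near equireplicate if `e = rc/v` is not an integer and every symbol
has replication number `⌊e⌋` or `⌈e⌉`. -/
def IsNearEquireplicate {r c v : ℕ} (T : Fin r × Fin c → Fin v) : Prop :=
  (avgRepl r c v).den ≠ 1 ∧
  ∀ s : Fin v, (replNum T s : ℤ) = ⌊avgRepl r c v⌋ ∨ (replNum T s : ℤ) = ⌈avgRepl r c v⌉

/-- The set of symbols occurring in row `i`. -/
def rowSet {r c v : ℕ} (T : Fin r × Fin c → Fin v) (i : Fin r) : Finset (Fin v) :=
  Finset.univ.image (fun j : Fin c => T (i, j))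

/-- The set of symbols occurring in column `j`. -/
def colSet {r c v : ℕ} (T : Fin r × Fin c → Fin v) (j : Fin c) : Finset (Fin v) :=
  Finset.univ.image (fun i : Fin r => T (i, j))

/-- Average row-column intersection size `λ_rc`. -/
def lamRC {r c v : ℕ} (T : Fin r × Fin c → Fin v) : ℚ :=
  (∑ i : Fin r, ∑ j : Fin c, ((rowSet T i ∩ colSet T j).card : ℚ)) / ((r : ℚ) * (c : ℚ))

/-- Average row-row intersection size `λ_rr`. -/
def lamRR {r c v : ℕ} (T : Fin r × Fin c → Fin v) : ℚ :=
  (∑ p ∈ Finset.univ.filter (fun p : Fin r × Fin r => p.1 < p.2),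
      ((rowSet T p.1 ∩ rowSet T p.2).card : ℚ)) / ((r : ℚ) * ((r : ℚ) - 1) / 2)

/-- Average column-column intersection size `λ_cc`. -/
def lamCC {r c v : ℕ} (T : Fin r × Fin c → Fin v) : ℚ :=
  (∑ p ∈ Finset.univ.filter (fun p : Fin c × Fin c => p.1 < p.2),
      ((colSet T p.1 ∩ colSet T p.2).card : ℚ)) / ((c : ℚ) * ((c : ℚ) - 1) / 2)

/-- An `(r × c, v)`-near triple array. -/
def IsNearTripleArray {r c v : ℕ} (T : Fin r × Fin c → Fin v) : Prop :=
  IsBinaryDesign T ∧ (IsEquireplicate T ∨ IsNearEquireplicate T) ∧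
  (∀ (i : Fin r) (j : Fin c),
    ((rowSet T i ∩ colSet T j).card : ℤ) = ⌊lamRC T⌋ ∨
    ((rowSet T i ∩ colSet T j).card : ℤ) = ⌈lamRC T⌉) ∧
  (∀ i j : Fin r, i ≠ j →
    ((rowSet T i ∩ rowSet T j).card : ℤ) = ⌊lamRR T⌋ ∨
    ((rowSet T i ∩ rowSet T j).card : ℤ) = ⌈lamRR T⌉) ∧
  (∀ i j : Fin c, i ≠ j →
    ((colSet T i ∩ colSet T j).card : ℤ) = ⌊lamCC T⌋ ∨
    ((colSet T i ∩ colSet T j).card : ℤ) = ⌈lamCC T⌉)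

/-- Deleting any column from an `(r × n, n)`-near triple array
(a near Youden rectangle) yields an `(r × (n − 1), n)`-near triple array. -/
-- AUX
lemma sum_div_card_mem_floor_ceil {α : Type*} [DecidableEq α] (s : Finset α) (f : α → ℕ) (a : ℕ)
    (hf : ∀ x ∈ s, f x = a ∨ f x = a + 1) (x : α) (hx : x ∈ s) :
    ((f x : ℤ) = ⌊(∑ y ∈ s, (f y : ℚ)) / (s.card : ℚ)⌋ ∨
      (f x : ℤ) = ⌈(∑ y ∈ s, (f y : ℚ)) / (s.card : ℚ)⌉) := by
  set m := (s.erase x).card with hm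
  have hcard : s.card = m + 1 := by
    rw [hm, Finset.card_erase_of_mem hx]
    have : 0 < s.card := Finset.card_pos.mpr ⟨x, hx⟩
    omega
  have hsum : (∑ y ∈ s, (f y : ℚ)) = (f x : ℚ) + ∑ y ∈ s.erase x, (f y : ℚ) :=
    (Finset.add_sum_erase s _ hx).symm
  have hub : ∑ y ∈ s.erase x, (f y : ℚ) ≤ (m : ℚ) * (a + 1) := by
    calc ∑ y ∈ s.erase x, (f y : ℚ) ≤ ∑ _y ∈ s.erase x, ((a : ℚ) + 1) := by
          apply Finset.sum_le_sum
          intro y hy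
          rcases hf y (Finset.mem_of_mem_erase hy) with h | h <;> rw [h] <;> push_cast <;> linarith
      _ = (m : ℚ) * (a + 1) := by rw [Finset.sum_const, ← hm, nsmul_eq_mul]
  have hlb : (m : ℚ) * a ≤ ∑ y ∈ s.erase x, (f y : ℚ) := by
    calc (m : ℚ) * a = ∑ _y ∈ s.erase x, (a : ℚ) := by rw [Finset.sum_const, ← hm, nsmul_eq_mul]
      _ ≤ _ := Finset.sum_le_sum (fun y hy => by
          rcases hf y (Finset.mem_of_mem_erase hy) with h | h <;> rw [h] <;> push_cast <;> linarith)
  have hcq : (s.card : ℚ) = (m : ℚ) + 1 := by rw [hcard]; push_cast; ring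
  have hpos : (0 : ℚ) < (s.card : ℚ) := by rw [hcq]; positivity
  rcases hf x hx with h | h
  · left
    rw [h]; symm
    rw [Int.floor_eq_iff]
    constructor
    · rw [le_div_iff₀ hpos, hcq, hsum, h]
      push_cast
      linarith
    · rw [div_lt_iff₀ hpos, hcq, hsum, h]
      push_cast
      linarith
  · right
    rw [h]; symm
    rw [Int.ceil_eq_iff]
    constructor
    · rw [lt_div_iff₀ hpos, hcq, hsum, h]
      push_cast
      linarith
    · rw [div_le_iff₀ hpos, hcq, hsum, h]
      push_cast
      linarith

lemma tri_card (k : ℕ) :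
    (((univ : Finset (Fin k × Fin k)).filter (fun p => p.1 < p.2)).card : ℚ)
      = (k : ℚ) * ((k : ℚ) - 1) / 2 := by
  have h1 : ((univ : Finset (Fin k × Fin k)).filter (fun p => p.1 < p.2)).card
      = ((univ : Finset (Fin k × Fin k)).filter (fun p => p.2 < p.1)).card := by
    apply Finset.card_nbij' Prod.swap Prod.swap <;> intro p <;> simp
  have hdiag : ((univ : Finset (Fin k × Fin k)).filter (fun p => p.1 = p.2)).card = k := by
    rw [show (univ : Finset (Fin k × Fin k)).filter (fun p => p.1 = p.2)
        = univ.image (fun i : Fin k => (i, i)) from by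
      ext ⟨x, y⟩
      simp only [mem_filter, mem_univ, true_and, mem_image, Prod.mk.injEq]
      constructor
      · rintro rfl; exact ⟨x, rfl, rfl⟩
      · rintro ⟨i, rfl, rfl⟩; rfl]
    rw [Finset.card_image_of_injective _ (fun a b h => (Prod.mk.injEq _ _ _ _).mp h |>.1)]
    simp
  have hsplit : ((univ : Finset (Fin k × Fin k)).filter (fun p => ¬ p.1 = p.2)).card
      = ((univ : Finset (Fin k × Fin k)).filter (fun p => p.1 < p.2)).card
        + ((univ : Finset (Fin k × Fin k)).filter (fun p => p.2 < p.1)).card := by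
    rw [show (univ : Finset (Fin k × Fin k)).filter (fun p => ¬ p.1 = p.2)
        = (univ.filter (fun p : Fin k × Fin k => p.1 < p.2))
          ∪ (univ.filter (fun p : Fin k × Fin k => p.2 < p.1)) from by
      rw [← Finset.filter_or]
      apply Finset.filter_congr
      intro p _
      constructor
      · intro h; exact lt_or_gt_of_ne h
      · intro h; rcases h with h | h
        · exact ne_of_lt h
        · exact (ne_of_lt h).symm]
    apply Finset.card_union_of_disjoint
    rw [Finset.disjoint_filter]
    intro p _ h1 h2
    exact absurd h2 (asymm h1)
  have htot : ((univ : Finset (Fin k × Fin k)).filter (fun p => p.1 = p.2)).card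
      + ((univ : Finset (Fin k × Fin k)).filter (fun p => ¬ p.1 = p.2)).card = k * k := by
    rw [Finset.card_filter_add_card_filter_not]
    simp [Finset.card_univ]
  have key : 2 * ((univ : Finset (Fin k × Fin k)).filter (fun p => p.1 < p.2)).card + k
      = k * k := by omega
  have h2 : (2 : ℚ) * (((univ : Finset (Fin k × Fin k)).filter (fun p => p.1 < p.2)).card : ℚ)
      + (k : ℚ) = (k : ℚ) * k := by exact_mod_cast congrArg (Nat.cast : ℕ → ℚ) key
  linarith

lemma replNum_eq_sum {r c v : ℕ} (T : Fin r × Fin c → Fin v) (s : Fin v) :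
    replNum T s = ∑ i : Fin r, (univ.filter (fun j : Fin c => T (i, j) = s)).card := by
  rw [replNum, Finset.card_eq_sum_card_fiberwise
    (f := Prod.fst) (t := univ) (fun _ _ => mem_univ _)]
  refine Finset.sum_congr rfl fun i _ => ?_
  apply Finset.card_nbij' Prod.snd (fun j => (i, j))
  · rintro ⟨a, b⟩ hp
    simp only [mem_coe, mem_filter, mem_univ, true_and] at hp ⊢
    obtain ⟨h1, h2⟩ := hp
    subst h2; exact h1
  · intro j hj
    simp only [mem_coe, mem_filter, mem_univ, true_and] at hj ⊢
    simp [hj]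
  · rintro ⟨a, b⟩ hp
    simp only [mem_coe, mem_filter, mem_univ, true_and] at hp
    simp [hp.2]
  · intro j _; rfl

lemma card_filter_of_inj {c v : ℕ} (f : Fin c → Fin v) (hf : Function.Injective f) (s : Fin v) :
    (univ.filter (fun j => f j = s)).card = if s ∈ univ.image f then 1 else 0 := by
  split_ifs with h
  · obtain ⟨j, _, hj⟩ := mem_image.mp h
    rw [show univ.filter (fun j => f j = s) = {j} from ?_, card_singleton]
    ext x
    simp only [mem_filter, mem_univ, true_and, mem_singleton, ← hj]
    exact ⟨fun hx => hf hx, fun hx => by rw [hx]⟩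
  · rw [Finset.filter_eq_empty_iff.mpr, card_empty]
    intro x _ hx
    exact h (mem_image.mpr ⟨x, mem_univ _, hx⟩)

theorem nearTripleArray_delete_column {r n : ℕ} (hr : 2 ≤ r) (hrn : r ≤ n)
    (T : Fin r × Fin n → Fin n) (hT : IsNearTripleArray T) (j0 : Fin n)
    (T' : Fin r × Fin (n - 1) → Fin n)
    (hT' : ∀ (i : Fin r) (j : Fin (n - 1)),
      T' (i, j) = T (i, if h : (j : ℕ) < (j0 : ℕ)
        then ⟨(j : ℕ), h.trans j0.isLt⟩
        else ⟨(j : ℕ) + 1, by have := j.isLt; omega⟩)) :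
    IsNearTripleArray T' := by
  classical
  obtain ⟨⟨hrowb, hcolb⟩, _hrep, _hrc, _hrr, hCC⟩ := hT
  have hn : 2 ≤ n := hr.trans hrn
  set g : Fin (n - 1) → Fin n := fun j => if h : (j : ℕ) < (j0 : ℕ)
        then ⟨(j : ℕ), h.trans j0.isLt⟩
        else ⟨(j : ℕ) + 1, by have := j.isLt; omega⟩ with hgdef
  have hTeq : ∀ (i : Fin r) (j : Fin (n - 1)), T' (i, j) = T (i, g j) := hT'
  have hginj : Function.Injective g := by
    intro a b hab
    simp only [hgdef] at hab
    split_ifs at hab with h1 h2 h2 <;>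
      (apply Fin.ext; have := congrArg Fin.val hab; simp at this; omega)
  have hgne : ∀ j, g j ≠ j0 := by
    intro j
    simp only [hgdef]
    split_ifs with h <;> (intro he; have := congrArg Fin.val he; simp at this; omega)
  have hrinj : ∀ i, Function.Injective (fun j : Fin n => T (i, j)) := by
    intro i a b hab
    by_contra hne
    exact hrowb i a b hne hab
  have hcinj : ∀ j, Function.Injective (fun i : Fin r => T (i, j)) := by
    intro j a b hab
    by_contra hne
    exact hcolb j a b hne hab
  have hrinj' : ∀ i, Function.Injective (fun j : Fin (n - 1) => T' (i, j)) := by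
    intro i a b hab
    simp only [hTeq] at hab
    exact hginj (hrinj i hab)
  have hrowfull : ∀ i, rowSet T i = univ := by
    intro i
    apply Finset.eq_univ_of_card
    rw [rowSet, Finset.card_image_of_injective _ (hrinj i), card_univ]
  have hgimg : univ.image g = univ \ {j0} := by
    apply Finset.eq_of_subset_of_card_le
    · intro x hx
      obtain ⟨j, _, hj⟩ := mem_image.mp hx
      rw [mem_sdiff, mem_singleton]
      exact ⟨mem_univ _, hj ▸ hgne j⟩
    · rw [Finset.card_sdiff_of_subset (by simp), Finset.card_image_of_injective _ hginj]
      simp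
  have hrow' : ∀ i, rowSet T' i = univ \ {T (i, j0)} := by
    intro i
    have e1 : rowSet T' i = univ.image (fun j : Fin (n - 1) => T (i, g j)) :=
      Finset.image_congr (fun j _ => hTeq i j)
    have e2 : (univ.image g).image (fun jj : Fin n => T (i, jj))
        = univ.image (fun j : Fin (n - 1) => T (i, g j)) := Finset.image_image
    rw [e1, ← e2, hgimg, Finset.image_sdiff _ _ (hrinj i), Finset.image_singleton]
    congr 1
    exact hrowfull i
  have hcol' : ∀ j, colSet T' j = colSet T (g j) :=
    fun j => Finset.image_congr (fun i _ => hTeq i j)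
  have hccard : ∀ jj : Fin n, (colSet T jj).card = r := by
    intro jj
    rw [colSet, Finset.card_image_of_injective _ (hcinj jj), card_univ, Fintype.card_fin]
  -- replication counts
  have hrepl : ∀ s : Fin n,
      replNum T' s + (univ.filter (fun i : Fin r => T (i, j0) = s)).card = r := by
    intro s
    rw [replNum_eq_sum]
    have hterm : ∀ i : Fin r, (univ.filter (fun j : Fin (n - 1) => T' (i, j) = s)).card
        = if T (i, j0) = s then 0 else 1 := by
      intro i
      rw [card_filter_of_inj _ (hrinj' i) s]
      have himg : (univ.image fun j : Fin (n - 1) => T' (i, j)) = rowSet T' i := rfl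
      rw [himg, hrow' i]
      by_cases hc : T (i, j0) = s
      · simp [hc]
      · simp [Finset.mem_sdiff, Ne.symm hc, hc]
    rw [Finset.sum_congr rfl (fun i _ => hterm i)]
    have h2 : (∑ i : Fin r, if T (i, j0) = s then 0 else 1)
        = (univ.filter (fun i : Fin r => ¬ T (i, j0) = s)).card := by
      rw [Finset.card_filter]
      exact Finset.sum_congr rfl fun i _ => by by_cases hc : T (i, j0) = s <;> simp [hc]
    have h3 := Finset.card_filter_add_card_filter_not
      (s := (univ : Finset (Fin r))) (p := fun i => T (i, j0) = s)
    rw [card_univ, Fintype.card_fin] at h3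
    rw [h2]
    omega
  have hk1 : ∀ s : Fin n, (univ.filter (fun i : Fin r => T (i, j0) = s)).card ≤ 1 := by
    intro s
    refine Finset.card_le_one.mpr ?_
    intro a ha b hb
    simp only [mem_filter, mem_univ, true_and] at ha hb
    exact hcinj j0 (ha.trans hb.symm)
  refine ⟨⟨?_, ?_⟩, ?_, ?_, ?_, ?_⟩
  · -- rows binary
    intro i j j' hne
    rw [hTeq i j, hTeq i j']
    exact hrowb i (g j) (g j') (fun h => hne (hginj h))
  · -- cols binary
    intro j i i' hne
    rw [hTeq i j, hTeq i' j]
    exact hcolb (g j) i i' hne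
  · -- replication
    rcases eq_or_lt_of_le hrn with heq | hlt
    · subst heq
      have hr0 : (r : ℚ) ≠ 0 := by positivity
      have havg : avgRepl r (r - 1) r = ((r - 1 : ℕ) : ℚ) := by
        rw [avgRepl, mul_comm, mul_div_assoc, div_self hr0, mul_one]
      left
      refine ⟨by rw [havg]; exact Rat.den_natCast _, ?_⟩
      intro s
      have hbij : Function.Bijective (fun i : Fin r => T (i, j0)) :=
        (Fintype.bijective_iff_injective_and_card _).mpr ⟨hcinj j0, by simp⟩
      obtain ⟨i, hi⟩ := hbij.2 s
      have hpos : 0 < (univ.filter (fun i : Fin r => T (i, j0) = s)).card :=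
        card_pos.mpr ⟨i, mem_filter.mpr ⟨mem_univ _, hi⟩⟩
      have h1 := hrepl s
      have h2 := hk1 s
      have h3 : replNum T' s = r - 1 := by omega
      rw [h3, havg]
    · right
      have hn0 : (0 : ℚ) < (n : ℚ) := by
        have : (0 : ℕ) < n := by omega
        exact_mod_cast this
      have hnm : ((n - 1 : ℕ) : ℚ) = (n : ℚ) - 1 := by
        have h1 : (1 : ℕ) ≤ n := by omega
        push_cast [Nat.cast_sub h1]
        ring
      have hrq : (r : ℚ) < (n : ℚ) := by exact_mod_cast hlt
      have hr2 : (2 : ℚ) ≤ (r : ℚ) := by exact_mod_cast hr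
      have hfloor : ⌊avgRepl r (n - 1) n⌋ = (r : ℤ) - 1 := by
        rw [avgRepl, hnm, Int.floor_eq_iff]
        constructor
        · rw [le_div_iff₀ hn0]
          push_cast
          nlinarith
        · rw [div_lt_iff₀ hn0]
          push_cast
          nlinarith
      have hceil : ⌈avgRepl r (n - 1) n⌉ = (r : ℤ) := by
        rw [avgRepl, hnm, Int.ceil_eq_iff]
        constructor
        · rw [lt_div_iff₀ hn0]
          push_cast
          nlinarith
        · rw [div_le_iff₀ hn0]
          push_cast
          nlinarith
      constructor
      · intro h
        have h2 : ((avgRepl r (n - 1) n).num : ℚ) = avgRepl r (n - 1) n := by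
          conv_rhs => rw [← Rat.num_div_den (avgRepl r (n - 1) n)]
          rw [h]
          simp
        have h3 : ((avgRepl r (n - 1) n).num : ℚ) * n = (r : ℚ) * ((n - 1 : ℕ) : ℚ) := by
          rw [h2, avgRepl, div_mul_cancel₀ _ (ne_of_gt hn0)]
        have h4 : (avgRepl r (n - 1) n).num * n = (r : ℤ) * ((n - 1 : ℕ) : ℤ) := by
          exact_mod_cast h3
        have h5 : (n : ℤ) ∣ (r : ℤ) * ((n - 1 : ℕ) : ℤ) :=
          ⟨(avgRepl r (n - 1) n).num, by linarith⟩
        have h6 : n ∣ r * (n - 1) := by exact_mod_cast h5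
        have hcop : Nat.Coprime n (n - 1) := by
          have he : n - 1 + 1 = n := by omega
          rw [← he]
          simp
        have h7 : n ∣ r := hcop.dvd_of_dvd_mul_right h6
        have := Nat.le_of_dvd (by omega) h7
        omega
      · intro s
        have h1 := hrepl s
        have h2 := hk1 s
        rcases Nat.le_one_iff_eq_zero_or_eq_one.mp h2 with h | h
        · right
          rw [hceil]
          have h3 : replNum T' s = r := by omega
          rw [h3]
        · left
          rw [hfloor]
          have h3 : replNum T' s = r - 1 := by omega
          rw [h3]
          omega
  · -- lamRC
    have hvalrc : ∀ (i : Fin r) (j : Fin (n - 1)),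
        (rowSet T' i ∩ colSet T' j).card = r - 1 ∨ (rowSet T' i ∩ colSet T' j).card = r := by
      intro i j
      rw [hrow' i, hcol' j]
      have hint : (univ \ {T (i, j0)}) ∩ colSet T (g j) = colSet T (g j) \ {T (i, j0)} := by
        ext x
        simp only [mem_inter, mem_sdiff, mem_univ, true_and, mem_singleton]
        tauto
      rw [hint]
      by_cases hm : T (i, j0) ∈ colSet T (g j)
      · left
        rw [Finset.card_sdiff_of_subset (by simpa using hm), hccard, card_singleton]
      · right
        rw [Finset.sdiff_eq_self_of_disjoint (by simpa using hm), hccard]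
    have hlam : lamRC T' = (∑ p ∈ (univ : Finset (Fin r × Fin (n - 1))),
        ((rowSet T' p.1 ∩ colSet T' p.2).card : ℚ))
          / (((univ : Finset (Fin r × Fin (n - 1))).card : ℚ)) := by
      rw [lamRC]
      congr 1
      · exact (Fintype.sum_prod_type
          (f := fun p : Fin r × Fin (n - 1) => ((rowSet T' p.1 ∩ colSet T' p.2).card : ℚ))).symm
      · rw [card_univ, Fintype.card_prod, Fintype.card_fin, Fintype.card_fin]
        push_cast
        ring
    intro i j
    rw [hlam]
    exact sum_div_card_mem_floor_ceil (univ : Finset (Fin r × Fin (n - 1)))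
      (fun p => (rowSet T' p.1 ∩ colSet T' p.2).card) (r - 1)
      (fun p _ => by
        rcases hvalrc p.1 p.2 with h | h
        · exact Or.inl h
        · right
          show (rowSet T' p.1 ∩ colSet T' p.2).card = r - 1 + 1
          omega)
      (i, j) (mem_univ _)
  · -- lamRR
    have hvalrr : ∀ (i j : Fin r), i ≠ j → (rowSet T' i ∩ rowSet T' j).card = n - 2 := by
      intro i j hne
      rw [hrow' i, hrow' j]
      have hint : (univ \ {T (i, j0)}) ∩ (univ \ {T (j, j0)})
          = univ \ {T (i, j0), T (j, j0)} := by
        ext x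
        simp only [mem_inter, mem_sdiff, mem_univ, true_and, mem_insert, mem_singleton]
        tauto
      rw [hint, Finset.card_sdiff_of_subset (subset_univ _), card_univ, Fintype.card_fin,
        Finset.card_insert_of_notMem (by simpa using hcolb j0 i j hne), card_singleton]
    have hlamrr : lamRR T' = (∑ p ∈ (univ.filter (fun p : Fin r × Fin r => p.1 < p.2)),
        ((rowSet T' p.1 ∩ rowSet T' p.2).card : ℚ))
          / (((univ.filter (fun p : Fin r × Fin r => p.1 < p.2)).card : ℚ)) := by
      rw [lamRR, tri_card]
    have hkey : ∀ p : Fin r × Fin r, p ∈ univ.filter (fun p : Fin r × Fin r => p.1 < p.2) →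
        (((rowSet T' p.1 ∩ rowSet T' p.2).card : ℤ) = ⌊lamRR T'⌋ ∨
          ((rowSet T' p.1 ∩ rowSet T' p.2).card : ℤ) = ⌈lamRR T'⌉) := by
      intro p hp
      rw [hlamrr]
      exact sum_div_card_mem_floor_ceil (univ.filter (fun p : Fin r × Fin r => p.1 < p.2))
        (fun q => (rowSet T' q.1 ∩ rowSet T' q.2).card) (n - 2)
        (fun q hq => Or.inl (hvalrr q.1 q.2 (ne_of_lt (mem_filter.mp hq).2))) p hp
    intro i j hne
    rcases lt_or_gt_of_ne hne with h | h
    · exact hkey (i, j) (mem_filter.mpr ⟨mem_univ _, h⟩)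
    · have := hkey (j, i) (mem_filter.mpr ⟨mem_univ _, h⟩)
      rwa [Finset.inter_comm] at this
  · -- lamCC
    have hge0 : 0 ≤ lamCC T := by
      rw [lamCC]
      apply div_nonneg
      · apply Finset.sum_nonneg
        intro p _
        positivity
      · have h2 : (2 : ℚ) ≤ (n : ℚ) := by exact_mod_cast hn
        nlinarith
    set a : ℕ := (⌊lamCC T⌋).toNat with hadef
    have ha : (a : ℤ) = ⌊lamCC T⌋ := Int.toNat_of_nonneg (Int.floor_nonneg.mpr hge0)
    have hceilcases : ⌈lamCC T⌉ = ⌊lamCC T⌋ ∨ ⌈lamCC T⌉ = ⌊lamCC T⌋ + 1 := by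
      have h1 := Int.floor_le_ceil (lamCC T)
      have h2 := Int.ceil_le_floor_add_one (lamCC T)
      omega
    have hvalcc : ∀ p : Fin (n - 1) × Fin (n - 1), p.1 ≠ p.2 →
        ((colSet T' p.1 ∩ colSet T' p.2).card = a ∨
          (colSet T' p.1 ∩ colSet T' p.2).card = a + 1) := by
      intro p hp
      rw [hcol', hcol']
      have hcc := hCC (g p.1) (g p.2) (fun h => hp (hginj h))
      rcases hcc with h | h
      · left
        have : ((colSet T (g p.1) ∩ colSet T (g p.2)).card : ℤ) = (a : ℤ) := by rw [h, ha]
        exact_mod_cast this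
      · rcases hceilcases with hc | hc
        · left
          rw [hc] at h
          have : ((colSet T (g p.1) ∩ colSet T (g p.2)).card : ℤ) = (a : ℤ) := by rw [h, ha]
          exact_mod_cast this
        · right
          rw [hc] at h
          have : ((colSet T (g p.1) ∩ colSet T (g p.2)).card : ℤ) = (a : ℤ) + 1 := by
            rw [h, ha]
          exact_mod_cast this
    have hlamcc : lamCC T' = (∑ p ∈ (univ.filter (fun p : Fin (n - 1) × Fin (n - 1) => p.1 < p.2)),
        ((colSet T' p.1 ∩ colSet T' p.2).card : ℚ))
          / (((univ.filter (fun p : Fin (n - 1) × Fin (n - 1) => p.1 < p.2)).card : ℚ)) := by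
      rw [lamCC, tri_card]
    have hkey : ∀ p : Fin (n - 1) × Fin (n - 1),
        p ∈ univ.filter (fun p : Fin (n - 1) × Fin (n - 1) => p.1 < p.2) →
        (((colSet T' p.1 ∩ colSet T' p.2).card : ℤ) = ⌊lamCC T'⌋ ∨
          ((colSet T' p.1 ∩ colSet T' p.2).card : ℤ) = ⌈lamCC T'⌉) := by
      intro p hp
      rw [hlamcc]
      exact sum_div_card_mem_floor_ceil
        (univ.filter (fun p : Fin (n - 1) × Fin (n - 1) => p.1 < p.2))
        (fun q => (colSet T' q.1 ∩ colSet T' q.2).card) a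
        (fun q hq => hvalcc q (ne_of_lt (mem_filter.mp hq).2)) p hp
    intro i j hne
    rcases lt_or_gt_of_ne hne with h | h
    · exact hkey (i, j) (mem_filter.mpr ⟨mem_univ _, h⟩)
    · have := hkey (j, i) (mem_filter.mpr ⟨mem_univ _, h⟩)
      rwa [Finset.inter_comm] at this
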